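/- arXiv:cond-mat/9211003 — 2 statements merged into one kernel-verified Lean document; each statement's English description precedes it below -/
import Mathlib

section
/- Fix ζ > 0; on [0,ζ] define ρ(z) = cosh(ζ/2 − z)/cosh(ζ/2), G(z,u) = sinh(min(z,u))·sinh(ζ − max(z,u))/sinh(ζ), Q(p) = 12p⁹ − 31p⁸ + 20p⁷, and define F[φ](z) = ρ(z) + (1 − ρ(z))·∫₀^ζ G(z,u)·Q(φ(u)) du. Let φ₀ = ρ and φ_{n+1} = F[φ_n] for n ≥ 0. Then for every n and every z ∈ [0,ζ]: ρ(z) ≤ φ_n(z) ≤ φ_{n+1}(z) ≤ 1; consequently the sequence (φ_n(z)) converges for every z ∈ [0,ζ] to a limit P(z) with ρ(z) ≤ P(z) ≤ 1. -/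
open Real

/-- Stationary no-branching absorption probability of the simplest model. -/
noncomputable def rhoAbs (ζ z : ℝ) : ℝ := Real.cosh (ζ/2 - z) / Real.cosh (ζ/2)

/-- Stationary first-branching kernel of the simplest model. -/
noncomputable def Gker (ζ z u : ℝ) : ℝ :=
  Real.sinh (min z u) * Real.sinh (ζ - max z u) / Real.sinh ζ

/-- The combinatorial polynomial Q₍₂,₃₎ counting strongly defective configurations. -/
def Qpoly (p : ℝ) : ℝ := 12*p^9 - 31*p^8 + 20*p^7

/-- The renormalization (recoding) operator of the simplest model. -/
noncomputable def Fop (ζ : ℝ) (φ : ℝ → ℝ) (z : ℝ) : ℝ :=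
  rhoAbs ζ z + (1 - rhoAbs ζ z) * ∫ u in (0:ℝ)..ζ, Gker ζ z u * Qpoly (φ u)

/-! ### Auxiliary lemmas -/

lemma Qpoly_hasDerivAt (x : ℝ) :
    HasDerivAt Qpoly (108*x^8 - 248*x^7 + 140*x^6) x := by
  have h : HasDerivAt (fun p : ℝ => 12*p^9 - 31*p^8 + 20*p^7)
      (12*(9*x^8) - 31*(8*x^7) + 20*(7*x^6)) x := by
    have h9 := (hasDerivAt_pow 9 x).const_mul (12:ℝ)
    have h8 := (hasDerivAt_pow 8 x).const_mul (31:ℝ)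
    have h7 := (hasDerivAt_pow 7 x).const_mul (20:ℝ)
    have := (h9.sub h8).add h7
    norm_num at this
    exact this
  convert h using 1
  · rfl
  · ring

lemma Qpoly_cont : Continuous Qpoly := by unfold Qpoly; continuity

lemma Qpoly_mono {p q : ℝ} (hp : 0 ≤ p) (hpq : p ≤ q) (hq : q ≤ 1) :
    Qpoly p ≤ Qpoly q := by
  have hmono : MonotoneOn Qpoly (Set.Icc (0:ℝ) 1) := by
    apply monotoneOn_of_deriv_nonneg (convex_Icc 0 1)
    · exact Qpoly_cont.continuousOn
    · intro x _
      exact (Qpoly_hasDerivAt x).differentiableAt.differentiableWithinAt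
    · intro x hx
      rw [interior_Icc] at hx
      rw [(Qpoly_hasDerivAt x).deriv]
      nlinarith [mul_nonneg (mul_nonneg (pow_nonneg hx.1.le 6)
        (by linarith [hx.2] : (0:ℝ) ≤ 35 - 27*x)) (by linarith [hx.2] : (0:ℝ) ≤ 1 - x)]
  exact hmono ⟨hp, hpq.trans hq⟩ ⟨hp.trans hpq, hq⟩ hpq

lemma Qpoly_nonneg {p : ℝ} (hp : 0 ≤ p) (hp1 : p ≤ 1) : 0 ≤ Qpoly p := by
  unfold Qpoly
  nlinarith [pow_nonneg hp 7, mul_nonneg (mul_nonneg (pow_nonneg hp 7)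
    (by linarith : (0:ℝ) ≤ 5/4 - p)) (by linarith : (0:ℝ) ≤ 4/3 - p)]

lemma Qpoly_le_one {p : ℝ} (hp : 0 ≤ p) (hp1 : p ≤ 1) : Qpoly p ≤ 1 := by
  have := Qpoly_mono hp hp1 le_rfl
  simpa [Qpoly] using this.trans_eq (by norm_num [Qpoly])

lemma rho_pos (ζ z : ℝ) : 0 < rhoAbs ζ z :=
  div_pos (Real.cosh_pos _) (Real.cosh_pos _)

lemma rho_le_one {ζ z : ℝ} (hz : z ∈ Set.Icc (0:ℝ) ζ) : rhoAbs ζ z ≤ 1 := by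
  obtain ⟨h0, h1⟩ := hz
  have hζ : (0:ℝ) ≤ ζ := h0.trans h1
  rw [rhoAbs, div_le_one (Real.cosh_pos _)]
  apply Real.cosh_le_cosh.2
  rw [abs_of_nonneg (by linarith : (0:ℝ) ≤ ζ/2)]
  rw [abs_le]
  constructor <;> linarith

lemma Gker_nonneg {ζ z u : ℝ} (hζ : 0 < ζ) (hz : z ∈ Set.Icc (0:ℝ) ζ)
    (hu : u ∈ Set.Icc (0:ℝ) ζ) : 0 ≤ Gker ζ z u := by
  apply div_nonneg (mul_nonneg ?_ ?_) (Real.sinh_nonneg_iff.2 hζ.le)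
  · exact Real.sinh_nonneg_iff.2 (le_min hz.1 hu.1)
  · exact Real.sinh_nonneg_iff.2 (by simp [max_le_iff]; exact ⟨hz.2, hu.2⟩)

lemma Gker_cont (ζ : ℝ) : Continuous (fun p : ℝ × ℝ => Gker ζ p.1 p.2) := by
  unfold Gker
  exact ((Real.continuous_sinh.comp (continuous_fst.min continuous_snd)).mul
    (Real.continuous_sinh.comp
      (continuous_const.sub (continuous_fst.max continuous_snd)))).div_const _

lemma Gker_cont_right (ζ z : ℝ) : Continuous (fun u => Gker ζ z u) := by
  unfold Gker
  exact ((Real.continuous_sinh.comp (continuous_const.min continuous_id)).mul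
    (Real.continuous_sinh.comp
      (continuous_const.sub (continuous_const.max continuous_id)))).div_const _

lemma integral_sinh' (a b : ℝ) : ∫ x in a..b, Real.sinh x = Real.cosh b - Real.cosh a :=
  intervalIntegral.integral_eq_sub_of_hasDerivAt (fun x _ => Real.hasDerivAt_cosh x)
    (Real.continuous_sinh.intervalIntegrable a b)

lemma integral_sinh_sub (c a b : ℝ) :
    ∫ x in a..b, Real.sinh (c - x) = Real.cosh (c - a) - Real.cosh (c - b) := by
  have hd : ∀ x ∈ Set.uIcc a b,
      HasDerivAt (fun y => -Real.cosh (c - y)) (Real.sinh (c - x)) x := by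
    intro x _
    have h1 : HasDerivAt (fun y : ℝ => c - y) (-1) x := (hasDerivAt_id x).const_sub c
    have := ((Real.hasDerivAt_cosh (c - x)).comp x h1).neg
    simp at this
    exact this
  have hi : IntervalIntegrable (fun x => Real.sinh (c - x)) MeasureTheory.volume a b :=
    (Real.continuous_sinh.comp (continuous_const.sub continuous_id)).intervalIntegrable a b
  rw [intervalIntegral.integral_eq_sub_of_hasDerivAt hd hi]
  ring

lemma alg (A B C D : ℝ) (hA : A ≠ 0) (hB : B ≠ 0) (hDC : D^2 - C^2 = 1) :
    (A*D + B*C)*(B*D - A*C - 1)/(2*A*B) + (A*D - B*C)*(B*D + A*C - 1)/(2*A*B) = 1 - D/B := by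
  field_simp
  linear_combination (2*A*B) * hDC

lemma key_identity (ζ z : ℝ) (hζ : 0 < ζ) :
    Real.sinh (ζ - z) * (Real.cosh z - 1) / Real.sinh ζ
      + Real.sinh z * (Real.cosh (ζ - z) - 1) / Real.sinh ζ = 1 - rhoAbs ζ z := by
  have hA : Real.sinh (ζ/2) ≠ 0 := ne_of_gt (Real.sinh_pos_iff.2 (by linarith))
  have hB : Real.cosh (ζ/2) ≠ 0 := ne_of_gt (Real.cosh_pos _)
  have hDC : Real.cosh (ζ/2 - z)^2 - Real.sinh (ζ/2 - z)^2 = 1 :=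
    Real.cosh_sq_sub_sinh_sq _
  have h1 := Real.sinh_add (ζ/2) (ζ/2 - z)
  rw [show ζ/2 + (ζ/2 - z) = ζ - z by ring] at h1
  have h2 := Real.cosh_sub (ζ/2) (ζ/2 - z)
  rw [sub_sub_cancel] at h2
  have h3 := Real.sinh_sub (ζ/2) (ζ/2 - z)
  rw [sub_sub_cancel] at h3
  have h4 := Real.cosh_add (ζ/2) (ζ/2 - z)
  rw [show ζ/2 + (ζ/2 - z) = ζ - z by ring] at h4
  have h5 := Real.sinh_add (ζ/2) (ζ/2)
  rw [show ζ/2 + ζ/2 = ζ by ring] at h5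
  rw [rhoAbs, h1, h2, h3, h4, h5]
  have := alg (Real.sinh (ζ/2)) (Real.cosh (ζ/2)) (Real.sinh (ζ/2 - z))
    (Real.cosh (ζ/2 - z)) hA hB hDC
  linear_combination this

lemma Gker_integral {ζ z : ℝ} (hζ : 0 < ζ) (hz : z ∈ Set.Icc (0:ℝ) ζ) :
    ∫ u in (0:ℝ)..ζ, Gker ζ z u = 1 - rhoAbs ζ z := by
  obtain ⟨hz0, hzζ⟩ := hz
  have hint : ∀ a b : ℝ, IntervalIntegrable (fun u => Gker ζ z u) MeasureTheory.volume a b :=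
    fun a b => (Gker_cont_right ζ z).intervalIntegrable a b
  rw [← intervalIntegral.integral_add_adjacent_intervals (hint 0 z) (hint z ζ)]
  have e1 : ∫ u in (0:ℝ)..z, Gker ζ z u
      = ∫ u in (0:ℝ)..z, Real.sinh u * (Real.sinh (ζ - z) / Real.sinh ζ) := by
    apply intervalIntegral.integral_congr
    intro u hu
    rw [Set.uIcc_of_le hz0] at hu
    rw [Gker, min_eq_right hu.2, max_eq_left hu.2]
    ring
  have e2 : ∫ u in z..ζ, Gker ζ z u
      = ∫ u in z..ζ, Real.sinh (ζ - u) * (Real.sinh z / Real.sinh ζ) := by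
    apply intervalIntegral.integral_congr
    intro u hu
    rw [Set.uIcc_of_le hzζ] at hu
    rw [Gker, min_eq_left hu.1, max_eq_right hu.1]
    ring
  rw [e1, e2, intervalIntegral.integral_mul_const, intervalIntegral.integral_mul_const,
    integral_sinh', integral_sinh_sub]
  have := key_identity ζ z hζ
  simp only [sub_self, Real.cosh_zero] at *
  linear_combination this

lemma rho_cont (ζ : ℝ) : Continuous (rhoAbs ζ) := by
  unfold rhoAbs
  exact (Real.continuous_cosh.comp (continuous_const.sub continuous_id)).div_const _

lemma Fop_cont {ζ : ℝ} {ψ : ℝ → ℝ} (hψ : Continuous ψ) : Continuous (Fop ζ ψ) := by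
  have hG : Continuous (Function.uncurry (fun z u => Gker ζ z u * Qpoly (ψ u))) :=
    (Gker_cont ζ).mul (Qpoly_cont.comp (hψ.comp continuous_snd))
  have hI : Continuous (fun z => ∫ u in (0:ℝ)..ζ, Gker ζ z u * Qpoly (ψ u)) :=
    intervalIntegral.continuous_parametric_intervalIntegral_of_continuous' hG 0 ζ
  unfold Fop
  exact (rho_cont ζ).add ((continuous_const.sub (rho_cont ζ)).mul hI)

lemma Fop_ge_rho {ζ : ℝ} (hζ : 0 < ζ) {ψ : ℝ → ℝ}
    (hb : ∀ u ∈ Set.Icc (0:ℝ) ζ, 0 ≤ ψ u ∧ ψ u ≤ 1) :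
    ∀ z ∈ Set.Icc (0:ℝ) ζ, rhoAbs ζ z ≤ Fop ζ ψ z := by
  intro z hz
  have hI : 0 ≤ ∫ u in (0:ℝ)..ζ, Gker ζ z u * Qpoly (ψ u) := by
    apply intervalIntegral.integral_nonneg hζ.le
    intro u hu
    exact mul_nonneg (Gker_nonneg hζ hz hu) (Qpoly_nonneg (hb u hu).1 (hb u hu).2)
  have h1 : (0:ℝ) ≤ 1 - rhoAbs ζ z := by linarith [rho_le_one hz]
  unfold Fop
  nlinarith

lemma Fop_mono {ζ : ℝ} (hζ : 0 < ζ) {ψ₁ ψ₂ : ℝ → ℝ}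
    (hψ₁ : Continuous ψ₁) (hψ₂ : Continuous ψ₂)
    (hb : ∀ u ∈ Set.Icc (0:ℝ) ζ, 0 ≤ ψ₁ u ∧ ψ₁ u ≤ ψ₂ u ∧ ψ₂ u ≤ 1) :
    ∀ z ∈ Set.Icc (0:ℝ) ζ, Fop ζ ψ₁ z ≤ Fop ζ ψ₂ z := by
  intro z hz
  have hI : (∫ u in (0:ℝ)..ζ, Gker ζ z u * Qpoly (ψ₁ u))
      ≤ ∫ u in (0:ℝ)..ζ, Gker ζ z u * Qpoly (ψ₂ u) := by
    apply intervalIntegral.integral_mono_on hζ.le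
    · exact ((Gker_cont_right ζ z).mul (Qpoly_cont.comp hψ₁)).intervalIntegrable 0 ζ
    · exact ((Gker_cont_right ζ z).mul (Qpoly_cont.comp hψ₂)).intervalIntegrable 0 ζ
    · intro u hu
      exact mul_le_mul_of_nonneg_left
        (Qpoly_mono (hb u hu).1 (hb u hu).2.1 (hb u hu).2.2) (Gker_nonneg hζ hz hu)
  have h1 : (0:ℝ) ≤ 1 - rhoAbs ζ z := by linarith [rho_le_one hz]
  unfold Fop
  nlinarith

lemma Fop_le_one {ζ : ℝ} (hζ : 0 < ζ) {ψ : ℝ → ℝ} (hψ : Continuous ψ)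
    (hb : ∀ u ∈ Set.Icc (0:ℝ) ζ, 0 ≤ ψ u ∧ ψ u ≤ 1) :
    ∀ z ∈ Set.Icc (0:ℝ) ζ, Fop ζ ψ z ≤ 1 := by
  intro z hz
  have hI : (∫ u in (0:ℝ)..ζ, Gker ζ z u * Qpoly (ψ u))
      ≤ ∫ u in (0:ℝ)..ζ, Gker ζ z u := by
    apply intervalIntegral.integral_mono_on hζ.le
    · exact ((Gker_cont_right ζ z).mul (Qpoly_cont.comp hψ)).intervalIntegrable 0 ζ
    · exact (Gker_cont_right ζ z).intervalIntegrable 0 ζ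
    · intro u hu
      calc Gker ζ z u * Qpoly (ψ u) ≤ Gker ζ z u * 1 :=
            mul_le_mul_of_nonneg_left (Qpoly_le_one (hb u hu).1 (hb u hu).2)
              (Gker_nonneg hζ hz hu)
        _ = Gker ζ z u := mul_one _
  rw [Gker_integral hζ hz] at hI
  have h0 : 0 < rhoAbs ζ z := rho_pos ζ z
  have h1 : rhoAbs ζ z ≤ 1 := rho_le_one hz
  unfold Fop
  nlinarith

/-- Iterates φₙ = Fⁿ[ρ] of the recoding operator starting from ρ are monotone
nondecreasing in n, bounded between ρ and 1 on [0,ζ], and hence converge pointwise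
to a limit P with ρ ≤ P ≤ 1. -/
theorem Fop_iterates_converge (ζ : ℝ) (hζ : 0 < ζ) (φ : ℕ → ℝ → ℝ)
    (h0 : φ 0 = rhoAbs ζ) (hsucc : ∀ n, φ (n+1) = Fop ζ (φ n)) :
    (∀ n, ∀ z ∈ Set.Icc (0:ℝ) ζ,
        rhoAbs ζ z ≤ φ n z ∧ φ n z ≤ φ (n+1) z ∧ φ (n+1) z ≤ 1) ∧
    ∃ P : ℝ → ℝ, ∀ z ∈ Set.Icc (0:ℝ) ζ,
        Filter.Tendsto (fun n => φ n z) Filter.atTop (nhds (P z)) ∧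
        rhoAbs ζ z ≤ P z ∧ P z ≤ 1 := by
  have hcont : ∀ n, Continuous (φ n) := by
    intro n
    induction n with
    | zero => rw [h0]; exact rho_cont ζ
    | succ n ih => rw [hsucc]; exact Fop_cont ih
  have key : ∀ n, ∀ z ∈ Set.Icc (0:ℝ) ζ,
      rhoAbs ζ z ≤ φ n z ∧ φ n z ≤ φ (n+1) z ∧ φ (n+1) z ≤ 1 := by
    intro n
    induction n with
    | zero =>
      intro z hz
      have hbρ : ∀ u ∈ Set.Icc (0:ℝ) ζ, 0 ≤ rhoAbs ζ u ∧ rhoAbs ζ u ≤ 1 :=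
        fun u hu => ⟨(rho_pos ζ u).le, rho_le_one hu⟩
      refine ⟨by simp [h0], ?_, ?_⟩
      · rw [hsucc, h0]
        exact Fop_ge_rho hζ hbρ z hz
      · rw [hsucc, h0]
        exact Fop_le_one hζ (rho_cont ζ) hbρ z hz
    | succ n ih =>
      intro z hz
      refine ⟨((ih z hz).1).trans (ih z hz).2.1, ?_, ?_⟩
      · have h := Fop_mono hζ (hcont n) (hcont (n+1)) (fun u hu =>
          ⟨(rho_pos ζ u).le.trans (ih u hu).1, (ih u hu).2.1, (ih u hu).2.2⟩) z hz
        rw [← hsucc n, ← hsucc (n+1)] at h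
        exact h
      · rw [hsucc (n+1)]
        apply Fop_le_one hζ (hcont (n+1)) (fun u hu =>
          ⟨(rho_pos ζ u).le.trans ((ih u hu).1.trans (ih u hu).2.1), (ih u hu).2.2⟩) z hz
  refine ⟨key, ⟨fun z => ⨆ n, φ n z, fun z hz => ?_⟩⟩
  have hb1 : ∀ n, φ n z ≤ 1 := by
    intro n
    cases n with
    | zero => rw [h0]; exact rho_le_one hz
    | succ n => exact (key n z hz).2.2
  have hmono : Monotone (fun n => φ n z) :=
    monotone_nat_of_le_succ (fun n => (key n z hz).2.1)
  have hbdd : BddAbove (Set.range fun n => φ n z) := by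
    refine ⟨1, ?_⟩
    rintro x ⟨n, rfl⟩
    exact hb1 n
  refine ⟨tendsto_atTop_ciSup hmono hbdd, ?_, ciSup_le hb1⟩
  calc rhoAbs ζ z = φ 0 z := by rw [h0]
    _ ≤ ⨆ n, φ n z := le_ciSup hbdd 0
end

section
/- Let B₁, B₂ ⊆ Fin 3 × Fin 3 both be strictly closing (SC) configurations, and form the combined black set B ⊆ Fin 6 × Fin 3 consisting of the cells (i,j) with i ≤ 2 and (i,j) ∈ B₁ together with the cells (i+3, j) with (i,j) ∈ B₂. Then no connected subset of B (under face-adjacency in Fin 6 × Fin 3) meets two distinct sides of the 6×3 rectangle, where the four sides are {(i,j) : i = 0}, {(i,j) : i = 5}, {(i,j) : j = 0}, and {(i,j) : j = 2}. -/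
/-- Face-adjacency on the 3×3 grid. -/
def Adj3 (a b : Fin 3 × Fin 3) : Prop :=
  (a.1 = b.1 ∧ (a.2.val + 1 = b.2.val ∨ b.2.val + 1 = a.2.val)) ∨
  (a.2 = b.2 ∧ (a.1.val + 1 = b.1.val ∨ b.1.val + 1 = a.1.val))

/-- A set of cells of the 3×3 grid is connected under face-adjacency. -/
def Connected3 (C : Set (Fin 3 × Fin 3)) : Prop :=
  ∀ x ∈ C, ∀ y ∈ C, Relation.ReflTransGen (fun a b => a ∈ C ∧ b ∈ C ∧ Adj3 a b) x y

/-- The four sides of the 3×3 grid. -/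
def Sides3 : Set (Set (Fin 3 × Fin 3)) :=
  {{c | c.1 = 0}, {c | c.1 = 2}, {c | c.2 = 0}, {c | c.2 = 2}}

/-- A set of black cells of the 3×3 grid is a strictly closing (SC) configuration:
no connected subset of it meets two distinct sides of the grid. -/
def SC3 (B : Set (Fin 3 × Fin 3)) : Prop :=
  ∀ C ⊆ B, Connected3 C →
    ¬ ∃ S₁ ∈ Sides3, ∃ S₂ ∈ Sides3, S₁ ≠ S₂ ∧ (C ∩ S₁).Nonempty ∧ (C ∩ S₂).Nonempty

/-- Face-adjacency on the 6×3 grid. -/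
def Adj63 (a b : Fin 6 × Fin 3) : Prop :=
  (a.1 = b.1 ∧ (a.2.val + 1 = b.2.val ∨ b.2.val + 1 = a.2.val)) ∨
  (a.2 = b.2 ∧ (a.1.val + 1 = b.1.val ∨ b.1.val + 1 = a.1.val))

/-- A set of cells of the 6×3 grid is connected under face-adjacency. -/
def Connected63 (C : Set (Fin 6 × Fin 3)) : Prop :=
  ∀ x ∈ C, ∀ y ∈ C, Relation.ReflTransGen (fun a b => a ∈ C ∧ b ∈ C ∧ Adj63 a b) x y

/-- The four sides of the 6×3 rectangle. -/
def Sides63 : Set (Set (Fin 6 × Fin 3)) :=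
  {{c | c.1 = 0}, {c | c.1 = 5}, {c | c.2 = 0}, {c | c.2 = 2}}

/-- Embedding of the left 3×3 square into the 6×3 rectangle. -/
def embLeft (p : Fin 3 × Fin 3) : Fin 6 × Fin 3 := (p.1.castLE (by omega), p.2)

/-- Embedding of the right 3×3 square into the 6×3 rectangle. -/
def embRight (p : Fin 3 × Fin 3) : Fin 6 × Fin 3 := (p.1.addNat 3, p.2)

-- aux
lemma adj3_symm {a b : Fin 3 × Fin 3} (h : Adj3 a b) : Adj3 b a := by
  rcases h with ⟨h1, h2⟩ | ⟨h1, h2⟩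
  · exact Or.inl ⟨h1.symm, h2.symm⟩
  · exact Or.inr ⟨h1.symm, h2.symm⟩

lemma connected3_singleton (a : Fin 3 × Fin 3) : Connected3 {a} := by
  intro x hx y hy
  rw [Set.mem_singleton_iff] at hx hy
  subst hx; subst hy; exact .refl

lemma connected3_insert {D : Set (Fin 3 × Fin 3)} {x₀ b₀ : Fin 3 × Fin 3}
    (hD : Connected3 D) (hb : b₀ ∈ D) (hadj : Adj3 x₀ b₀) :
    Connected3 (insert x₀ D) := by
  have lift : ∀ {u v}, Relation.ReflTransGen (fun a b => a ∈ D ∧ b ∈ D ∧ Adj3 a b) u v →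
      Relation.ReflTransGen (fun a b => a ∈ insert x₀ D ∧ b ∈ insert x₀ D ∧ Adj3 a b) u v :=
    fun h => Relation.ReflTransGen.lift (r := fun a b => a ∈ D ∧ b ∈ D ∧ Adj3 a b)
      (p := fun a b => a ∈ insert x₀ D ∧ b ∈ insert x₀ D ∧ Adj3 a b) id (fun a b ⟨h1, h2, h3⟩ =>
      ⟨Set.mem_insert_of_mem _ h1, Set.mem_insert_of_mem _ h2, h3⟩) _ _ h
  intro u hu v hv
  rcases Set.mem_insert_iff.mp hu with rfl | hu2
  · rcases Set.mem_insert_iff.mp hv with rfl | hv2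
    · exact .refl
    · exact .head ⟨Set.mem_insert _ _, Set.mem_insert_of_mem _ hb, hadj⟩ (lift (hD b₀ hb v hv2))
  · rcases Set.mem_insert_iff.mp hv with hv2 | hv2
    · exact hv2 ▸ ((lift (hD u hu2 b₀ hb)).tail
        ⟨Set.mem_insert_of_mem _ hb, Set.mem_insert _ _, adj3_symm hadj⟩)
    · exact lift (hD u hu2 v hv2)

lemma adj_left {a b : Fin 3 × Fin 3} (h : Adj63 (embLeft a) (embLeft b)) : Adj3 a b := by
  simp only [Adj63, Adj3, embLeft, Fin.ext_iff, Fin.coe_castLE] at h ⊢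
  omega

lemma adj_right {a b : Fin 3 × Fin 3} (h : Adj63 (embRight a) (embRight b)) : Adj3 a b := by
  simp only [Adj63, Adj3, embRight, Fin.ext_iff, Fin.coe_addNat] at h ⊢
  omega

lemma adj_cross {a b : Fin 3 × Fin 3} (h : Adj63 (embLeft a) (embRight b)) : a.1 = 2 := by
  have ha := a.1.isLt
  simp only [Adj63, embLeft, embRight, Fin.ext_iff, Fin.coe_castLE, Fin.coe_addNat] at h ⊢
  omega

lemma adj_cross' {a b : Fin 3 × Fin 3} (h : Adj63 (embRight a) (embLeft b)) : a.1 = 0 := by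
  have hb := b.1.isLt
  simp only [Adj63, embLeft, embRight, Fin.ext_iff, Fin.coe_castLE, Fin.coe_addNat] at h ⊢
  omega

lemma run_left {B₁ B₂ : Set (Fin 3 × Fin 3)} {C : Set (Fin 6 × Fin 3)}
    (hC : C ⊆ embLeft '' B₁ ∪ embRight '' B₂)
    {x y : Fin 6 × Fin 3}
    (hpath : Relation.ReflTransGen (fun a b => a ∈ C ∧ b ∈ C ∧ Adj63 a b) x y)
    {x₀ : Fin 3 × Fin 3} (hx₀ : x₀ ∈ B₁) (hxe : embLeft x₀ = x) :
    ∃ D, D ⊆ B₁ ∧ Connected3 D ∧ x₀ ∈ D ∧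
      ((∃ y₀ ∈ D, embLeft y₀ = y) ∨ (∃ z ∈ D, z.1 = (2 : Fin 3))) := by
  induction hpath using Relation.ReflTransGen.head_induction_on generalizing x₀ with
  | refl => exact ⟨{x₀}, Set.singleton_subset_iff.mpr hx₀, connected3_singleton x₀, rfl,
      Or.inl ⟨x₀, rfl, hxe⟩⟩
  | head hstep htail ih =>
    obtain ⟨haC, hcC, hadj⟩ := hstep
    subst hxe
    rcases hC hcC with ⟨c₀, hc₀B, rfl⟩ | ⟨c₀, hc₀B, rfl⟩
    · obtain ⟨D, hDB, hDc, hcD, hdisj⟩ := ih hc₀B rfl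
      refine ⟨insert x₀ D, Set.insert_subset_iff.mpr ⟨hx₀, hDB⟩,
        connected3_insert hDc hcD (adj_left hadj), Set.mem_insert _ _, ?_⟩
      rcases hdisj with ⟨y₀, hy, he⟩ | ⟨z, hz, h2⟩
      · exact Or.inl ⟨y₀, Set.mem_insert_of_mem _ hy, he⟩
      · exact Or.inr ⟨z, Set.mem_insert_of_mem _ hz, h2⟩
    · exact ⟨{x₀}, Set.singleton_subset_iff.mpr hx₀, connected3_singleton x₀, rfl,
        Or.inr ⟨x₀, rfl, adj_cross hadj⟩⟩

lemma run_right {B₁ B₂ : Set (Fin 3 × Fin 3)} {C : Set (Fin 6 × Fin 3)}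
    (hC : C ⊆ embLeft '' B₁ ∪ embRight '' B₂)
    {x y : Fin 6 × Fin 3}
    (hpath : Relation.ReflTransGen (fun a b => a ∈ C ∧ b ∈ C ∧ Adj63 a b) x y)
    {x₀ : Fin 3 × Fin 3} (hx₀ : x₀ ∈ B₂) (hxe : embRight x₀ = x) :
    ∃ D, D ⊆ B₂ ∧ Connected3 D ∧ x₀ ∈ D ∧
      ((∃ y₀ ∈ D, embRight y₀ = y) ∨ (∃ z ∈ D, z.1 = (0 : Fin 3))) := by
  induction hpath using Relation.ReflTransGen.head_induction_on generalizing x₀ with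
  | refl => exact ⟨{x₀}, Set.singleton_subset_iff.mpr hx₀, connected3_singleton x₀, rfl,
      Or.inl ⟨x₀, rfl, hxe⟩⟩
  | head hstep htail ih =>
    obtain ⟨haC, hcC, hadj⟩ := hstep
    subst hxe
    rcases hC hcC with ⟨c₀, hc₀B, rfl⟩ | ⟨c₀, hc₀B, rfl⟩
    · exact ⟨{x₀}, Set.singleton_subset_iff.mpr hx₀, connected3_singleton x₀, rfl,
        Or.inr ⟨x₀, rfl, adj_cross' hadj⟩⟩
    · obtain ⟨D, hDB, hDc, hcD, hdisj⟩ := ih hc₀B rfl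
      refine ⟨insert x₀ D, Set.insert_subset_iff.mpr ⟨hx₀, hDB⟩,
        connected3_insert hDc hcD (adj_right hadj), Set.mem_insert _ _, ?_⟩
      rcases hdisj with ⟨y₀, hy, he⟩ | ⟨z, hz, h2⟩
      · exact Or.inl ⟨y₀, Set.mem_insert_of_mem _ hy, he⟩
      · exact Or.inr ⟨z, Set.mem_insert_of_mem _ hz, h2⟩

-- Sides3 membership
lemma m3_i0 : ({c | c.1 = 0} : Set (Fin 3 × Fin 3)) ∈ Sides3 := by simp [Sides3]
lemma m3_i2 : ({c | c.1 = 2} : Set (Fin 3 × Fin 3)) ∈ Sides3 := by simp [Sides3]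
lemma m3_j0 : ({c | c.2 = 0} : Set (Fin 3 × Fin 3)) ∈ Sides3 := by simp [Sides3]
lemma m3_j2 : ({c | c.2 = 2} : Set (Fin 3 × Fin 3)) ∈ Sides3 := by simp [Sides3]

-- pairwise distinctness of the 3×3 sides we use
lemma ne3 {A B : Set (Fin 3 × Fin 3)} (p : Fin 3 × Fin 3) (h1 : p ∈ A) (h2 : p ∉ B) : A ≠ B :=
  fun h => h2 (h ▸ h1)

lemma ne_i0_i2 : ({c | c.1 = 0} : Set (Fin 3 × Fin 3)) ≠ {c | c.1 = 2} :=
  ne3 (0, 0) rfl (by rw [Set.mem_setOf_eq]; decide)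
lemma ne_i0_j0 : ({c | c.1 = 0} : Set (Fin 3 × Fin 3)) ≠ {c | c.2 = 0} :=
  ne3 (0, 1) rfl (by rw [Set.mem_setOf_eq]; decide)
lemma ne_i0_j2 : ({c | c.1 = 0} : Set (Fin 3 × Fin 3)) ≠ {c | c.2 = 2} :=
  ne3 (0, 0) rfl (by rw [Set.mem_setOf_eq]; decide)
lemma ne_i2_j0 : ({c | c.1 = 2} : Set (Fin 3 × Fin 3)) ≠ {c | c.2 = 0} :=
  ne3 (2, 1) rfl (by rw [Set.mem_setOf_eq]; decide)
lemma ne_i2_j2 : ({c | c.1 = 2} : Set (Fin 3 × Fin 3)) ≠ {c | c.2 = 2} :=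
  ne3 (2, 0) rfl (by rw [Set.mem_setOf_eq]; decide)
lemma ne_j0_j2 : ({c | c.2 = 0} : Set (Fin 3 × Fin 3)) ≠ {c | c.2 = 2} :=
  ne3 (0, 0) rfl (by rw [Set.mem_setOf_eq]; decide)

-- translation of side membership across the embeddings
lemma eL0 {p : Fin 3 × Fin 3} (h : embLeft p ∈ ({c | c.1 = 0} : Set (Fin 6 × Fin 3))) :
    p.1 = 0 := by
  rw [Set.mem_setOf_eq] at h
  apply Fin.ext
  have h' := congrArg Fin.val h
  simp only [embLeft, Fin.coe_castLE] at h'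
  exact h'
lemma eL5 {p : Fin 3 × Fin 3} (h : embLeft p ∈ ({c | c.1 = 5} : Set (Fin 6 × Fin 3))) :
    False := by
  rw [Set.mem_setOf_eq] at h
  have := p.1.isLt
  simp [embLeft, Fin.ext_iff] at h
  omega
lemma eLj0 {p : Fin 3 × Fin 3} (h : embLeft p ∈ ({c | c.2 = 0} : Set (Fin 6 × Fin 3))) :
    p.2 = 0 := h
lemma eLj2 {p : Fin 3 × Fin 3} (h : embLeft p ∈ ({c | c.2 = 2} : Set (Fin 6 × Fin 3))) :
    p.2 = 2 := h
lemma eR0 {p : Fin 3 × Fin 3} (h : embRight p ∈ ({c | c.1 = 0} : Set (Fin 6 × Fin 3))) :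
    False := by
  rw [Set.mem_setOf_eq] at h
  have h' := congrArg Fin.val h
  simp only [embRight, Fin.coe_addNat, Fin.val_zero] at h'
  omega
lemma eR5 {p : Fin 3 × Fin 3} (h : embRight p ∈ ({c | c.1 = 5} : Set (Fin 6 × Fin 3))) :
    p.1 = 2 := by
  rw [Set.mem_setOf_eq] at h
  apply Fin.ext
  simp [embRight, Fin.ext_iff] at h
  omega
lemma eRj0 {p : Fin 3 × Fin 3} (h : embRight p ∈ ({c | c.2 = 0} : Set (Fin 6 × Fin 3))) :
    p.2 = 0 := h
lemma eRj2 {p : Fin 3 × Fin 3} (h : embRight p ∈ ({c | c.2 = 2} : Set (Fin 6 × Fin 3))) :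
    p.2 = 2 := h

lemma apply_sc {B : Set (Fin 3 × Fin 3)} (h : SC3 B) {D : Set (Fin 3 × Fin 3)}
    (hD : D ⊆ B) (hc : Connected3 D)
    {T₁ T₂ : Set (Fin 3 × Fin 3)} (h1 : T₁ ∈ Sides3) (h2 : T₂ ∈ Sides3) (hne : T₁ ≠ T₂)
    {a b : Fin 3 × Fin 3} (ha : a ∈ D) (ha' : a ∈ T₁) (hb : b ∈ D) (hb' : b ∈ T₂) : False :=
  h D hD hc ⟨T₁, h1, T₂, h2, hne, ⟨a, ha, ha'⟩, ⟨b, hb, hb'⟩⟩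

lemma finish_left {B₁ : Set (Fin 3 × Fin 3)} (h₁ : SC3 B₁) {D : Set (Fin 3 × Fin 3)}
    (hD : D ⊆ B₁) (hc : Connected3 D) {x₀ w : Fin 3 × Fin 3} (hx : x₀ ∈ D) (hw : w ∈ D)
    {S₁ S₂ : Set (Fin 6 × Fin 3)} (hS₁ : S₁ ∈ Sides63) (hS₂ : S₂ ∈ Sides63) (hne : S₁ ≠ S₂)
    (hxs : embLeft x₀ ∈ S₁) (hws : embLeft w ∈ S₂) : False := by
  simp only [Sides63, Set.mem_insert_iff, Set.mem_singleton_iff] at hS₁ hS₂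
  rcases hS₁ with rfl | rfl | rfl | rfl <;> rcases hS₂ with rfl | rfl | rfl | rfl
  · exact hne rfl
  · exact eL5 hws
  · exact apply_sc h₁ hD hc m3_i0 m3_j0 ne_i0_j0 hx (eL0 hxs) hw (eLj0 hws)
  · exact apply_sc h₁ hD hc m3_i0 m3_j2 ne_i0_j2 hx (eL0 hxs) hw (eLj2 hws)
  · exact eL5 hxs
  · exact eL5 hxs
  · exact eL5 hxs
  · exact eL5 hxs
  · exact apply_sc h₁ hD hc m3_j0 m3_i0 ne_i0_j0.symm hx (eLj0 hxs) hw (eL0 hws)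
  · exact eL5 hws
  · exact hne rfl
  · exact apply_sc h₁ hD hc m3_j0 m3_j2 ne_j0_j2 hx (eLj0 hxs) hw (eLj2 hws)
  · exact apply_sc h₁ hD hc m3_j2 m3_i0 ne_i0_j2.symm hx (eLj2 hxs) hw (eL0 hws)
  · exact eL5 hws
  · exact apply_sc h₁ hD hc m3_j2 m3_j0 ne_j0_j2.symm hx (eLj2 hxs) hw (eLj0 hws)
  · exact hne rfl

lemma finish_left_cross {B₁ : Set (Fin 3 × Fin 3)} (h₁ : SC3 B₁) {D : Set (Fin 3 × Fin 3)}
    (hD : D ⊆ B₁) (hc : Connected3 D) {x₀ z : Fin 3 × Fin 3} (hx : x₀ ∈ D) (hz : z ∈ D)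
    {S₁ : Set (Fin 6 × Fin 3)} (hS₁ : S₁ ∈ Sides63)
    (hxs : embLeft x₀ ∈ S₁) (hz2 : z.1 = 2) : False := by
  simp only [Sides63, Set.mem_insert_iff, Set.mem_singleton_iff] at hS₁
  rcases hS₁ with rfl | rfl | rfl | rfl
  · exact apply_sc h₁ hD hc m3_i0 m3_i2 ne_i0_i2 hx (eL0 hxs) hz hz2
  · exact eL5 hxs
  · exact apply_sc h₁ hD hc m3_j0 m3_i2 ne_i2_j0.symm hx (eLj0 hxs) hz hz2
  · exact apply_sc h₁ hD hc m3_j2 m3_i2 ne_i2_j2.symm hx (eLj2 hxs) hz hz2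

lemma finish_right {B₂ : Set (Fin 3 × Fin 3)} (h₂ : SC3 B₂) {D : Set (Fin 3 × Fin 3)}
    (hD : D ⊆ B₂) (hc : Connected3 D) {x₀ w : Fin 3 × Fin 3} (hx : x₀ ∈ D) (hw : w ∈ D)
    {S₁ S₂ : Set (Fin 6 × Fin 3)} (hS₁ : S₁ ∈ Sides63) (hS₂ : S₂ ∈ Sides63) (hne : S₁ ≠ S₂)
    (hxs : embRight x₀ ∈ S₁) (hws : embRight w ∈ S₂) : False := by
  simp only [Sides63, Set.mem_insert_iff, Set.mem_singleton_iff] at hS₁ hS₂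
  rcases hS₁ with rfl | rfl | rfl | rfl <;> rcases hS₂ with rfl | rfl | rfl | rfl
  · exact eR0 hxs
  · exact eR0 hxs
  · exact eR0 hxs
  · exact eR0 hxs
  · exact eR0 hws
  · exact hne rfl
  · exact apply_sc h₂ hD hc m3_i2 m3_j0 ne_i2_j0 hx (eR5 hxs) hw (eRj0 hws)
  · exact apply_sc h₂ hD hc m3_i2 m3_j2 ne_i2_j2 hx (eR5 hxs) hw (eRj2 hws)
  · exact eR0 hws
  · exact apply_sc h₂ hD hc m3_j0 m3_i2 ne_i2_j0.symm hx (eRj0 hxs) hw (eR5 hws)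
  · exact hne rfl
  · exact apply_sc h₂ hD hc m3_j0 m3_j2 ne_j0_j2 hx (eRj0 hxs) hw (eRj2 hws)
  · exact eR0 hws
  · exact apply_sc h₂ hD hc m3_j2 m3_i2 ne_i2_j2.symm hx (eRj2 hxs) hw (eR5 hws)
  · exact apply_sc h₂ hD hc m3_j2 m3_j0 ne_j0_j2.symm hx (eRj2 hxs) hw (eRj0 hws)
  · exact hne rfl

lemma finish_right_cross {B₂ : Set (Fin 3 × Fin 3)} (h₂ : SC3 B₂) {D : Set (Fin 3 × Fin 3)}
    (hD : D ⊆ B₂) (hc : Connected3 D) {x₀ z : Fin 3 × Fin 3} (hx : x₀ ∈ D) (hz : z ∈ D)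
    {S₁ : Set (Fin 6 × Fin 3)} (hS₁ : S₁ ∈ Sides63)
    (hxs : embRight x₀ ∈ S₁) (hz0 : z.1 = 0) : False := by
  simp only [Sides63, Set.mem_insert_iff, Set.mem_singleton_iff] at hS₁
  rcases hS₁ with rfl | rfl | rfl | rfl
  · exact eR0 hxs
  · exact apply_sc h₂ hD hc m3_i2 m3_i0 ne_i0_i2.symm hx (eR5 hxs) hz hz0
  · exact apply_sc h₂ hD hc m3_j0 m3_i0 ne_i0_j0.symm hx (eRj0 hxs) hz hz0
  · exact apply_sc h₂ hD hc m3_j2 m3_i0 ne_i0_j2.symm hx (eRj2 hxs) hz hz0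

/-- Two SC squares attached face to face contain no connected black cluster joining two
distinct sides of the combined 6×3 rectangle. -/
theorem SC_squares_attached_do_not_connect (B₁ B₂ : Set (Fin 3 × Fin 3))
    (h₁ : SC3 B₁) (h₂ : SC3 B₂) :
    ∀ C ⊆ embLeft '' B₁ ∪ embRight '' B₂, Connected63 C →
      ¬ ∃ S₁ ∈ Sides63, ∃ S₂ ∈ Sides63, S₁ ≠ S₂ ∧ (C ∩ S₁).Nonempty ∧ (C ∩ S₂).Nonempty := by
  rintro C hC hconn ⟨S₁, hS₁, S₂, hS₂, hne, ⟨x, hxC, hxS⟩, ⟨y, hyC, hyS⟩⟩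
  have hpath := hconn x hxC y hyC
  rcases hC hxC with ⟨x₀, hx₀B, rfl⟩ | ⟨x₀, hx₀B, rfl⟩
  · obtain ⟨D, hDB, hDc, hxD, hdisj⟩ := run_left hC hpath hx₀B rfl
    rcases hdisj with ⟨y₀, hyD, rfl⟩ | ⟨z, hzD, hz2⟩
    · exact finish_left h₁ hDB hDc hxD hyD hS₁ hS₂ hne hxS hyS
    · exact finish_left_cross h₁ hDB hDc hxD hzD hS₁ hxS hz2
  · obtain ⟨D, hDB, hDc, hxD, hdisj⟩ := run_right hC hpath hx₀B rfl
    rcases hdisj with ⟨y₀, hyD, rfl⟩ | ⟨z, hzD, hz0⟩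
    · exact finish_right h₂ hDB hDc hxD hyD hS₁ hS₂ hne hxS hyS
    · exact finish_right_cross h₂ hDB hDc hxD hzD hS₁ hxS hz0
end
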